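/- Fix natural numbers n, m, s with m + s ≥ 1, and set N = m + s + 2. The number of lattice paths from (0,0) to (n,n) using unit North and East steps such that in every prefix the number of North steps minus the number of East steps lies between −s and m (inclusive) equals the alternating sum Σ_{k∈ℤ} [ C(2n, n + kN) − C(2n, n + s + 1 + kN) ]. -/

import Mathlib

/-- Binomial coefficient `C(r, j)` with an integer lower index, equal to `0`
when `j < 0` or `j > r`. -/
def zchoose (r : ℕ) (j : ℤ) : ℤ := if 0 ≤ j then (r.choose j.toNat : ℤ) else 0

lemma zchoose_eq_zero_of_neg {r : ℕ} {j : ℤ} (h : j < 0) : zchoose r j = 0 :=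
  if_neg (not_le.2 h)

lemma zchoose_eq_zero_of_lt {r : ℕ} {j : ℤ} (h : (r : ℤ) < j) : zchoose r j = 0 := by
  have h0 : 0 ≤ j := le_trans (Int.natCast_nonneg r) h.le
  rw [zchoose, if_pos h0, Nat.choose_eq_zero_of_lt (by omega)]
  simp

lemma zchoose_support {r : ℕ} {j : ℤ} (h : zchoose r j ≠ 0) : 0 ≤ j ∧ j ≤ (r : ℤ) := by
  by_contra hc
  push_neg at hc
  rcases le_or_gt 0 j with h0 | h0
  · exact h (zchoose_eq_zero_of_lt (hc h0))
  · exact h (zchoose_eq_zero_of_neg h0)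

lemma zchoose_symm (r : ℕ) (j : ℤ) : zchoose r ((r : ℤ) - j) = zchoose r j := by
  rcases le_or_gt 0 j with h0 | h0
  · rcases le_or_gt j (r : ℤ) with h1 | h1
    · rw [zchoose, zchoose, if_pos h0, if_pos (by omega)]
      have hj : j.toNat ≤ r := by omega
      have : ((r : ℤ) - j).toNat = r - j.toNat := by omega
      rw [this, Nat.choose_symm hj]
    · rw [zchoose_eq_zero_of_lt h1, zchoose_eq_zero_of_neg (by omega)]
  · rw [zchoose_eq_zero_of_neg h0, zchoose_eq_zero_of_lt (by omega)]

lemma zchoose_succ (r : ℕ) (j : ℤ) :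
    zchoose (r + 1) j = zchoose r j + zchoose r (j - 1) := by
  rcases lt_trichotomy j 0 with h | h | h
  · rw [zchoose_eq_zero_of_neg h, zchoose_eq_zero_of_neg h, zchoose_eq_zero_of_neg (by omega)]
    ring
  · subst h
    norm_num [zchoose]
  · have h0 : 0 ≤ j := h.le
    have h1 : 0 ≤ j - 1 := by omega
    rw [zchoose, zchoose, zchoose, if_pos h0, if_pos h0, if_pos h1]
    have hj : j.toNat = (j - 1).toNat + 1 := by omega
    rw [hj, Nat.choose_succ_succ']
    push_cast
    ring

lemma zchoose_zero_left (j : ℤ) : zchoose 0 j = if j = 0 then 1 else 0 := by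
  rcases lt_trichotomy j 0 with h | h | h
  · rw [zchoose_eq_zero_of_neg h, if_neg (by omega)]
  · subst h; simp [zchoose]
  · rw [zchoose_eq_zero_of_lt (by exact_mod_cast h), if_neg (by omega)]

/-- the summand of the reflection formula -/
def ffun (m s L : ℕ) (t k : ℤ) : ℤ :=
  zchoose L (t + k * ((m : ℤ) + s + 2)) - zchoose L (t + s + 1 + k * ((m : ℤ) + s + 2))

/-- the reflection alternating sum -/
noncomputable def F (m s L : ℕ) (t : ℤ) : ℤ := ∑ᶠ k : ℤ, ffun m s L t k

lemma hNpos (m s : ℕ) : (0 : ℤ) < (m : ℤ) + s + 2 := by positivity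

lemma support_zterm_finite (L : ℕ) (c : ℤ) {N : ℤ} (hN : 1 ≤ N) :
    (Function.support fun k : ℤ => zchoose L (c + k * N)).Finite := by
  apply Set.Finite.subset (Set.finite_Icc (-((L : ℤ) + |c|)) ((L : ℤ) + |c|))
  intro k hk
  have h := zchoose_support hk
  have hNa : 1 ≤ |N| := le_trans hN (le_abs_self N)
  have h1 : |k| ≤ |k * N| := by
    rw [abs_mul]
    nlinarith [abs_nonneg k]
  have h2 : |k * N| ≤ (L : ℤ) + |c| := by
    rw [abs_le]
    constructor
    · nlinarith [le_abs_self c, neg_abs_le c]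
    · nlinarith [le_abs_self c, neg_abs_le c]
  simp only [Set.mem_Icc]
  constructor <;> nlinarith [le_abs_self k, neg_abs_le k]

lemma supp1 (m s L : ℕ) (t : ℤ) :
    (Function.support fun k : ℤ => zchoose L (t + k * ((m : ℤ) + s + 2))).Finite :=
  support_zterm_finite L t (by have := hNpos m s; omega)

lemma supp2 (m s L : ℕ) (t : ℤ) :
    (Function.support fun k : ℤ => zchoose L (t + s + 1 + k * ((m : ℤ) + s + 2))).Finite :=
  support_zterm_finite L (t + s + 1) (by have := hNpos m s; omega)

lemma supp_ffun (m s L : ℕ) (t : ℤ) :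
    (Function.support fun k : ℤ => ffun m s L t k).Finite := by
  apply Set.Finite.subset ((supp1 m s L t).union (supp2 m s L t))
  intro k hk
  simp only [Function.mem_support, ffun] at hk
  by_contra hc
  simp only [Set.mem_union, Function.mem_support, not_or, not_not] at hc
  rw [hc.1, hc.2] at hk
  simp at hk

lemma F_succ (m s L : ℕ) (t : ℤ) : F m s (L + 1) t = F m s L t + F m s L (t - 1) := by
  have h : ∀ k : ℤ, ffun m s (L + 1) t k = ffun m s L t k + ffun m s L (t - 1) k := by
    intro k
    unfold ffun
    rw [zchoose_succ, zchoose_succ]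
    have e1 : t + k * ((m : ℤ) + s + 2) - 1 = t - 1 + k * ((m : ℤ) + s + 2) := by ring
    have e2 : t + s + 1 + k * ((m : ℤ) + s + 2) - 1 = t - 1 + s + 1 + k * ((m : ℤ) + s + 2) := by
      ring
    rw [e1, e2]
    ring
  rw [F, finsum_congr h, finsum_add_distrib (supp_ffun m s L t) (supp_ffun m s L (t - 1))]
  rfl

lemma F_top (m s L : ℕ) (t : ℤ) (h : 2 * t - L = (m : ℤ) + 1) : F m s L t = 0 := by
  set N : ℤ := (m : ℤ) + s + 2 with hN
  have key : ∀ k : ℤ, zchoose L (t + s + 1 + k * N) = zchoose L (t + (-1 - k) * N) := by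
    intro k
    have e : t + (-1 - k) * N = (L : ℤ) - (t + s + 1 + k * N) := by
      rw [hN]; linarith
    rw [e, zchoose_symm]
  have hb : Function.Bijective fun k : ℤ => -1 - k := by
    constructor
    · intro a b hab; dsimp only at hab; omega
    · intro a; exact ⟨-1 - a, by ring⟩
  have hcomp : (∑ᶠ k : ℤ, zchoose L (t + (-1 - k) * N)) =
      ∑ᶠ k : ℤ, zchoose L (t + k * N) :=
    finsum_comp (g := fun k : ℤ => zchoose L (t + k * N)) (fun k : ℤ => -1 - k) hb
  have hfin2 : (Function.support fun k : ℤ => zchoose L (t + (-1 - k) * N)).Finite := by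
    have := (supp1 m s L t).preimage (f := fun k : ℤ => -1 - k) (by intro a _ b _ hab; dsimp only at hab; omega)
    convert this using 1
    rfl
  calc F m s L t = (∑ᶠ k : ℤ, (zchoose L (t + k * N) - zchoose L (t + (-1 - k) * N))) := by
        rw [F]; exact finsum_congr fun k => by rw [ffun, key]
    _ = (∑ᶠ k : ℤ, zchoose L (t + k * N)) - ∑ᶠ k : ℤ, zchoose L (t + (-1 - k) * N) :=
        finsum_sub_distrib (supp1 m s L t) hfin2
    _ = 0 := by rw [hcomp]; ring

lemma F_bot (m s L : ℕ) (t : ℤ) (h : 2 * t - L = -(s : ℤ) - 1) : F m s L t = 0 := by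
  set N : ℤ := (m : ℤ) + s + 2 with hN
  have key : ∀ k : ℤ, zchoose L (t + k * N) = zchoose L (t + s + 1 + (-k) * N) := by
    intro k
    have e : t + k * N = (L : ℤ) - (t + s + 1 + (-k) * N) := by
      rw [hN]; linarith
    rw [e, zchoose_symm]
  have hb : Function.Bijective fun k : ℤ => -k := by
    constructor
    · intro a b hab; dsimp only at hab; omega
    · intro a; exact ⟨-a, by ring⟩
  have hcomp : (∑ᶠ k : ℤ, zchoose L (t + s + 1 + (-k) * N)) =
      ∑ᶠ k : ℤ, zchoose L (t + s + 1 + k * N) :=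
    finsum_comp (g := fun k : ℤ => zchoose L (t + s + 1 + k * N)) (fun k : ℤ => -k) hb
  have hfin2 : (Function.support fun k : ℤ => zchoose L (t + s + 1 + (-k) * N)).Finite := by
    have := (supp2 m s L t).preimage (f := fun k : ℤ => -k) (by intro a _ b _ hab; dsimp only at hab; omega)
    convert this using 1
    rfl
  calc F m s L t
      = (∑ᶠ k : ℤ, (zchoose L (t + s + 1 + (-k) * N) - zchoose L (t + s + 1 + k * N))) := by
        rw [F]; exact finsum_congr fun k => by rw [ffun, key]
    _ = (∑ᶠ k : ℤ, zchoose L (t + s + 1 + (-k) * N)) - ∑ᶠ k : ℤ, zchoose L (t + s + 1 + k * N) :=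
        finsum_sub_distrib hfin2 (supp2 m s L t)
    _ = 0 := by rw [hcomp]; ring

/-- helper: if `|c| < N` and `c + k*N = 0` then `k = 0` and `c = 0`. -/
lemma mul_out {k N c : ℤ} (hN : 0 < N) (h1 : -N < c) (h2 : c < N)
    (h : c + k * N = 0) : k = 0 ∧ c = 0 := by
  rcases lt_trichotomy k 0 with hk | hk | hk
  · exfalso
    have hk1 : k ≤ -1 := by omega
    have hm := mul_le_mul_of_nonneg_right hk1 hN.le
    linarith
  · refine ⟨hk, ?_⟩
    subst hk
    linarith
  · exfalso
    have hk1 : 1 ≤ k := by omega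
    have hm := mul_le_mul_of_nonneg_right hk1 hN.le
    linarith

/-- the DP count -/
def gp (m s : ℕ) : ℕ → ℤ → ℕ
  | 0, t => if t = 0 then 1 else 0
  | (L + 1), t =>
    if -(s : ℤ) ≤ 2 * t - ((L : ℤ) + 1) ∧ 2 * t - ((L : ℤ) + 1) ≤ (m : ℤ) then
      gp m s L t + gp m s L (t - 1)
    else 0

lemma gp_eq_zero {m s L : ℕ} {t : ℤ}
    (h : 2 * t - L < -(s : ℤ) ∨ (m : ℤ) < 2 * t - L) : gp m s L t = 0 := by
  cases L with
  | zero =>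
    rw [gp]
    rw [if_neg]
    intro ht
    subst ht
    simp at h
    omega
  | succ L =>
    rw [gp, if_neg]
    push_cast at h ⊢
    omega

lemma gp_eq_F (m s : ℕ) : ∀ (L : ℕ) (t : ℤ), -(s : ℤ) ≤ 2 * t - L → 2 * t - L ≤ (m : ℤ) →
    (gp m s L t : ℤ) = F m s L t := by
  intro L
  induction L with
  | zero =>
    intro t h1 h2
    simp only [Nat.cast_zero, sub_zero] at h1 h2
    have hN := hNpos m s
    by_cases ht : t = 0
    · subst ht
      rw [gp, if_pos rfl]
      rw [F]
      rw [finsum_eq_single _ (0 : ℤ)]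
      · rw [ffun]
        simp only [zero_mul, add_zero, zero_add]
        rw [zchoose_zero_left, zchoose_zero_left]
        rw [if_pos rfl, if_neg (by omega)]
        norm_num
      · intro k hk
        rw [ffun]
        have h1 : zchoose 0 ((0:ℤ) + k * ((m : ℤ) + s + 2)) = 0 := by
          rw [zchoose_zero_left, if_neg]
          intro hc
          obtain ⟨hk0, -⟩ := mul_out hN (by linarith) (by linarith)
            (show (0:ℤ) + k * ((m : ℤ) + s + 2) = 0 by linarith)
          exact hk hk0
        have h2 : zchoose 0 ((0:ℤ) + s + 1 + k * ((m : ℤ) + s + 2)) = 0 := by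
          rw [zchoose_zero_left, if_neg]
          intro hc
          obtain ⟨-, hc0⟩ := mul_out hN (by linarith) (by linarith)
            (show ((s : ℤ) + 1) + k * ((m : ℤ) + s + 2) = 0 by linarith)
          omega
        rw [h1, h2]; ring
    · rw [gp, if_neg ht]
      rw [F]
      rw [finsum_eq_zero_of_forall_eq_zero]
      · simp
      intro k
      rw [ffun]
      have h1 : zchoose 0 (t + k * ((m : ℤ) + s + 2)) = 0 := by
        rw [zchoose_zero_left, if_neg]
        intro hc
        obtain ⟨-, hc0⟩ := mul_out hN (by linarith) (by linarith)
          (show t + k * ((m : ℤ) + s + 2) = 0 by linarith)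
        exact ht hc0
      have h2 : zchoose 0 (t + s + 1 + k * ((m : ℤ) + s + 2)) = 0 := by
        rw [zchoose_zero_left, if_neg]
        intro hc
        obtain ⟨-, hc0⟩ := mul_out hN (by linarith) (by linarith)
          (show (t + (s : ℤ) + 1) + k * ((m : ℤ) + s + 2) = 0 by linarith)
        omega
      rw [h1, h2]; ring
  | succ L ih =>
    intro t h1 h2
    push_cast at h1 h2
    rw [gp, if_pos ⟨by push_cast; omega, by push_cast; omega⟩]
    have hA : (gp m s L t : ℤ) = F m s L t ∨ (gp m s L t = 0 ∧ F m s L t = 0) := by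
      by_cases h : 2 * t - (L : ℤ) ≤ (m : ℤ)
      · exact Or.inl (ih t (by omega) h)
      · refine Or.inr ⟨gp_eq_zero (Or.inr (by omega)), F_top m s L t (by omega)⟩
    have hB : (gp m s L (t - 1) : ℤ) = F m s L (t - 1) ∨
        (gp m s L (t - 1) = 0 ∧ F m s L (t - 1) = 0) := by
      by_cases h : -(s : ℤ) ≤ 2 * (t - 1) - (L : ℤ)
      · exact Or.inl (ih (t - 1) h (by omega))
      · refine Or.inr ⟨gp_eq_zero (Or.inl (by omega)), F_bot m s L (t - 1) (by omega)⟩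
    rw [F_succ]
    push_cast
    rcases hA with hA | ⟨hA1, hA2⟩ <;> rcases hB with hB | ⟨hB1, hB2⟩ <;>
      simp_all <;> omega

lemma count_true_add_count_false (l : List Bool) : l.count true + l.count false = l.length := by
  induction l with
  | nil => simp
  | cons b l ih => cases b <;> simp [List.count_cons] <;> omega

lemma prefix_concat_iff {p l : List Bool} {b : Bool} :
    p <+: l ++ [b] ↔ p <+: l ∨ p = l ++ [b] := by
  constructor
  · rintro ⟨r, hr⟩
    rcases List.eq_nil_or_concat' r with rfl | ⟨r', c, rfl⟩
    · right; simpa using hr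
    · left
      rw [← List.append_assoc] at hr
      have hlen : ([c] : List Bool).length = ([b] : List Bool).length := rfl
      obtain ⟨h1, -⟩ := List.append_inj' hr rfl
      exact ⟨r', h1⟩
  · rintro (h | rfl)
    · exact h.trans (List.prefix_append l [b])
    · exact List.prefix_rfl

/-- Finset of valid bounded paths, built recursively. -/
def pathsF (m s : ℕ) : ℕ → ℤ → Finset (List Bool)
  | 0, t => if t = 0 then {[]} else ∅
  | (L + 1), t =>
    if -(s : ℤ) ≤ 2 * t - ((L : ℤ) + 1) ∧ 2 * t - ((L : ℤ) + 1) ≤ (m : ℤ) then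
      ((pathsF m s L t).image (fun l => l ++ [false])) ∪
        ((pathsF m s L (t - 1)).image (fun l => l ++ [true]))
    else ∅

lemma card_pathsF (m s : ℕ) : ∀ (L : ℕ) (t : ℤ), (pathsF m s L t).card = gp m s L t := by
  intro L
  induction L with
  | zero =>
    intro t
    rw [pathsF, gp]
    split_ifs <;> simp
  | succ L ih =>
    intro t
    rw [pathsF, gp]
    split_ifs with h
    · rw [Finset.card_union_of_disjoint, Finset.card_image_of_injective _
        (List.append_left_injective [false]), Finset.card_image_of_injective _
        (List.append_left_injective [true]), ih, ih]
      rw [Finset.disjoint_left]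
      rintro a ha hb
      simp only [Finset.mem_image] at ha hb
      obtain ⟨l1, -, h1⟩ := ha
      obtain ⟨l2, -, h2⟩ := hb
      have := List.append_inj' (h1.trans h2.symm) rfl
      simpa using this.2
    · simp

lemma mem_pathsF (m s : ℕ) : ∀ (L : ℕ) (t : ℤ) (l : List Bool),
    l ∈ pathsF m s L t ↔
      (l.length = L ∧ ((l.count true : ℤ)) = t ∧
        ∀ p : List Bool, p <+: l →
          -(s : ℤ) ≤ (p.count true : ℤ) - p.count false ∧
            (p.count true : ℤ) - p.count false ≤ (m : ℤ)) := by
  intro L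
  induction L with
  | zero =>
    intro t l
    rw [pathsF]
    split_ifs with ht
    · subst ht
      simp only [Finset.mem_singleton]
      constructor
      · rintro rfl
        refine ⟨rfl, by simp, ?_⟩
        intro p hp
        have : p = [] := List.eq_nil_of_prefix_nil hp
        subst this
        simp
      · rintro ⟨h1, -, -⟩
        exact List.length_eq_zero_iff.mp h1
    · simp only [Finset.notMem_empty, false_iff]
      rintro ⟨h1, h2, -⟩
      have : l = [] := List.length_eq_zero_iff.mp h1
      subst this
      simp at h2
      omega
  | succ L ih =>
    intro t l
    rw [pathsF]
    split_ifs with hg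
    · constructor
      · intro hl
        rcases Finset.mem_union.mp hl with hl | hl <;>
          obtain ⟨l', hl', rfl⟩ := Finset.mem_image.mp hl <;>
          obtain ⟨hlen, hcnt, hpre⟩ := (ih _ l').mp hl'
        · refine ⟨by simp [hlen], by simp [hcnt], ?_⟩
          intro p hp
          rcases prefix_concat_iff.mp hp with hp | rfl
          · exact hpre p hp
          · have hc := count_true_add_count_false l'
            have e1 : (l' ++ [false]).count true = l'.count true := by simp
            have e2 : (l' ++ [false]).count false = l'.count false + 1 := by simp
            rw [e1, e2]
            push_cast
            omega
        · have e1 : (l' ++ [true]).count true = l'.count true + 1 := by simp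
          have e2 : (l' ++ [true]).count false = l'.count false := by simp
          refine ⟨by simp [hlen], by rw [e1]; push_cast; omega, ?_⟩
          intro p hp
          rcases prefix_concat_iff.mp hp with hp | rfl
          · exact hpre p hp
          · have hc := count_true_add_count_false l'
            rw [e1, e2]
            push_cast
            omega
      · rintro ⟨hlen, hcnt, hpre⟩
        rcases List.eq_nil_or_concat' l with rfl | ⟨l', b, rfl⟩
        · simp at hlen
        · have hlen' : l'.length = L := by simp at hlen; omega
          have hpre' : ∀ p : List Bool, p <+: l' →
              -(s : ℤ) ≤ (p.count true : ℤ) - p.count false ∧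
                (p.count true : ℤ) - p.count false ≤ (m : ℤ) := fun p hp =>
            hpre p (hp.trans (List.prefix_append l' [b]))
          apply Finset.mem_union.mpr
          cases b
          · left
            apply Finset.mem_image.mpr
            refine ⟨l', (ih t l').mpr ⟨hlen', ?_, hpre'⟩, rfl⟩
            simpa using hcnt
          · right
            apply Finset.mem_image.mpr
            refine ⟨l', (ih (t - 1) l').mpr ⟨hlen', ?_, hpre'⟩, rfl⟩
            have e1 : (l' ++ [true]).count true = l'.count true + 1 := by simp
            rw [e1] at hcnt
            push_cast at hcnt ⊢
            omega
    · simp only [Finset.notMem_empty, false_iff]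
      rintro ⟨hlen, hcnt, hpre⟩
      obtain ⟨h1, h2⟩ := hpre l List.prefix_rfl
      have hc := count_true_add_count_false l
      exact hg ⟨by omega, by omega⟩

theorem card_doubly_bounded_paths (n m s : ℕ) (hms : 1 ≤ m + s) :
    (Nat.card {l : List Bool //
        l.length = 2 * n ∧ l.count true = n ∧
        ∀ p : List Bool, p <+: l →
          -(s : ℤ) ≤ (p.count true : ℤ) - p.count false ∧
            (p.count true : ℤ) - p.count false ≤ m} : ℤ) =
      ∑ᶠ k : ℤ, (zchoose (2 * n) (n + k * (m + s + 2)) -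
        zchoose (2 * n) (n + s + 1 + k * (m + s + 2))) := by
  have hset : {l : List Bool | l.length = 2 * n ∧ l.count true = n ∧
      ∀ p : List Bool, p <+: l →
        -(s : ℤ) ≤ (p.count true : ℤ) - p.count false ∧
          (p.count true : ℤ) - p.count false ≤ m} = ↑(pathsF m s (2 * n) (n : ℤ)) := by
    ext l
    rw [Finset.mem_coe, mem_pathsF]
    simp only [Set.mem_setOf_eq]
    constructor
    · rintro ⟨h1, h2, h3⟩; exact ⟨h1, by exact_mod_cast h2, h3⟩
    · rintro ⟨h1, h2, h3⟩; exact ⟨h1, by exact_mod_cast h2, h3⟩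
  have hcard : Nat.card {l : List Bool //
      l.length = 2 * n ∧ l.count true = n ∧
      ∀ p : List Bool, p <+: l →
        -(s : ℤ) ≤ (p.count true : ℤ) - p.count false ∧
          (p.count true : ℤ) - p.count false ≤ m} = (pathsF m s (2 * n) (n : ℤ)).card := by
    rw [← Set.ncard_coe_finset, ← hset, ← Nat.card_coe_set_eq]
    rfl
  rw [hcard]
  calc ((pathsF m s (2 * n) (n : ℤ)).card : ℤ) = (gp m s (2 * n) (n : ℤ) : ℤ) := by
        rw [card_pathsF]
    _ = F m s (2 * n) (n : ℤ) :=
        gp_eq_F m s (2 * n) (n : ℤ) (by push_cast; omega) (by push_cast; omega)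
    _ = _ := rfl
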